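/- Let S be a non-abelian finite simple group, let s ≥ 1, and let K = S^s. Then l^proj(K) > l(K), where l(K) denotes the least cardinality of a finite set on which K acts faithfully and transitively. -/

import Mathlib

/-- A witness that a non-abelian simple group `S` admits a non-trivial projective
representation of size `m = |F|^n` over some finite field `F`. -/
structure ProjRepWitness (S : Type) [Group S] (m : ℕ) : Type 1 where
  F : Type
  [instF : Field F]
  [instFin : Fintype F]
  n : ℕ
  hn : 1 ≤ n
  card_eq : Fintype.card F ^ n = m
  φ : S →* (Matrix.GeneralLinearGroup (Fin n) F ⧸
        Subgroup.center (Matrix.GeneralLinearGroup (Fin n) F))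
  nontriv : φ ≠ 1

/-- `lproj S` is the smallest size of a non-trivial projective representation of `S`. -/
noncomputable def lproj (S : Type) [Group S] : ℕ :=
  sInf {m | Nonempty (ProjRepWitness S m)}

/-- `m` is the degree of a faithful transitive permutation representation of `K`. -/
def IsFaithfulTransitiveDegree (K : Type*) [Group K] (m : ℕ) : Prop :=
  ∃ (X : Type) (φ : K →* Equiv.Perm X), Finite X ∧ Nat.card X = m ∧
    Function.Injective φ ∧ ∀ x y : X, ∃ k : K, φ k x = y

/-- `permDeg K` is the minimal degree of a faithful transitive permutation
representation of `K`. -/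
noncomputable def permDeg (K : Type*) [Group K] : ℕ :=
  sInf {m | IsFaithfulTransitiveDegree K m}

/-! ### Auxiliary material -/

open Matrix Projectivization
open scoped LinearAlgebra.Projectivization

theorem StatementAux.linMul_apply {R M : Type*} [Semiring R] [AddCommMonoid M] [Module R M]
    (e₁ e₂ : M ≃ₗ[R] M) (m : M) : (e₁ * e₂) m = e₁ (e₂ m) := rfl

namespace StatementAux

section LinPerm
variable {K : Type} [Field K] {V : Type} [AddCommGroup V] [Module K V]

/-- The permutation of projective space induced by a linear automorphism. -/
noncomputable def linPerm (e : V ≃ₗ[K] V) : Equiv.Perm (ℙ K V) where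
  toFun := Projectivization.map e.toLinearMap e.injective
  invFun := Projectivization.map e.symm.toLinearMap e.symm.injective
  left_inv := by
    intro p
    induction p using Projectivization.ind with
    | h v hv =>
      rw [Projectivization.map_mk, Projectivization.map_mk]
      exact (Projectivization.mk_eq_mk_iff' _ _ _ _ _).2 ⟨1, by simp⟩
  right_inv := by
    intro p
    induction p using Projectivization.ind with
    | h v hv =>
      rw [Projectivization.map_mk, Projectivization.map_mk]
      exact (Projectivization.mk_eq_mk_iff' _ _ _ _ _).2 ⟨1, by simp⟩

theorem linPerm_mk (e : V ≃ₗ[K] V) (v : V) (hv : v ≠ 0) :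
    linPerm e (Projectivization.mk K v hv) =
      Projectivization.mk K (e v) (by simp [hv]) := rfl

/-- `linPerm` as a group homomorphism. -/
noncomputable def linPermHom : (V ≃ₗ[K] V) →* Equiv.Perm (ℙ K V) where
  toFun := linPerm
  map_one' := by
    ext p
    induction p using Projectivization.ind with
    | h v hv =>
      rw [Equiv.Perm.coe_one, id_eq, linPerm_mk]
      exact (Projectivization.mk_eq_mk_iff' _ _ _ _ _).2 ⟨1, by simp⟩
  map_mul' := by
    intro e f
    ext p
    induction p using Projectivization.ind with
    | h v hv =>
      simp only [Equiv.Perm.coe_mul, Function.comp_apply, linPerm_mk]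
      exact (Projectivization.mk_eq_mk_iff' _ _ _ _ _).2 ⟨1, by rw [one_smul]; rfl⟩

end LinPerm

section GLPerm
variable {K : Type} [Field K] {n : ℕ}

/-- The linear automorphism of `Fin n → K` attached to `A : GL (Fin n) K`. -/
noncomputable def glLin (A : GL (Fin n) K) : (Fin n → K) ≃ₗ[K] (Fin n → K) :=
  LinearMap.GeneralLinearGroup.generalLinearEquiv K (Fin n → K)
    (Matrix.GeneralLinearGroup.toLin A)

theorem glLin_apply (A : GL (Fin n) K) (v : Fin n → K) :
    glLin A v = (A : Matrix (Fin n) (Fin n) K) *ᵥ v := rfl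

/-- The action of `GL (Fin n) K` on projective space, as a homomorphism to permutations. -/
noncomputable def glPermHom (K : Type) [Field K] (n : ℕ) :
    GL (Fin n) K →* Equiv.Perm (ℙ K (Fin n → K)) :=
  linPermHom.comp
    ((LinearMap.GeneralLinearGroup.generalLinearEquiv K (Fin n → K)).toMonoidHom.comp
      (Matrix.GeneralLinearGroup.toLin.toMonoidHom))

theorem glPermHom_mk (A : GL (Fin n) K) (v : Fin n → K) (hv : v ≠ 0)
    (h' : (A : Matrix (Fin n) (Fin n) K) *ᵥ v ≠ 0) :
    glPermHom K n A (Projectivization.mk K v hv) =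
      Projectivization.mk K ((A : Matrix (Fin n) (Fin n) K) *ᵥ v) h' := rfl

theorem mulVec_ne_zero (A : GL (Fin n) K) (v : Fin n → K) (hv : v ≠ 0) :
    (A : Matrix (Fin n) (Fin n) K) *ᵥ v ≠ 0 :=
  (glLin A).map_ne_zero_iff.mpr hv

theorem glPermHom_eq_one_of_mem_center (A : GL (Fin n) K)
    (hA : A ∈ Subgroup.center (GL (Fin n) K)) : glPermHom K n A = 1 := by
  set M : Matrix (Fin n) (Fin n) K := (A : Matrix (Fin n) (Fin n) K) with hM
  have hcomm : ∀ i j : Fin n, i ≠ j → Commute (single i j 1) M := by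
    intro i j hij
    set E : Matrix (Fin n) (Fin n) K := single i j (1 : K) with hE
    have hE2 : E * E = 0 := by
      rw [hE]
      simp [Matrix.single_mul_single_of_ne, Ne.symm hij]
    have h1 : ((1 : Matrix (Fin n) (Fin n) K) + E) * (1 - E) = 1 := by
      have : ((1 : Matrix (Fin n) (Fin n) K) + E) * (1 - E) = 1 - E * E := by noncomm_ring
      rw [this, hE2, sub_zero]
    have h2 : ((1 : Matrix (Fin n) (Fin n) K) - E) * (1 + E) = 1 := by
      have : ((1 : Matrix (Fin n) (Fin n) K) - E) * (1 + E) = 1 - E * E := by noncomm_ring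
      rw [this, hE2, sub_zero]
    set u : GL (Fin n) K := ⟨1 + E, 1 - E, h1, h2⟩ with hu
    have := Subgroup.mem_center_iff.mp hA u
    have hval : ((1 : Matrix (Fin n) (Fin n) K) + E) * M = M * (1 + E) :=
      congrArg Units.val this
    have : E * M = M * E := by
      have h := hval
      rw [add_mul, mul_add, one_mul, mul_one] at h
      exact add_left_cancel h
    exact this
  obtain ⟨r, hr⟩ := mem_range_scalar_of_commute_single hcomm
  ext p
  induction p using Projectivization.ind with
  | h v hv =>
    rw [Equiv.Perm.coe_one, id_eq, glPermHom_mk A v hv (mulVec_ne_zero A v hv)]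
    have hMv : M *ᵥ v = r • v := by
      rw [← hr, scalar_apply]
      ext i
      rw [mulVec_diagonal]
      simp
    exact (Projectivization.mk_eq_mk_iff' _ _ _ _ _).2 ⟨r, by rw [← hMv]⟩

theorem mem_center_of_glPermHom_eq_one (hn : n ≠ 0) (A : GL (Fin n) K)
    (hA : glPermHom K n A = 1) : A ∈ Subgroup.center (GL (Fin n) K) := by
  set M : Matrix (Fin n) (Fin n) K := (A : Matrix (Fin n) (Fin n) K) with hM
  have key : ∀ (v : Fin n → K), v ≠ 0 → ∃ c : K, c • v = M *ᵥ v := by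
    intro v hv
    have h1 : glPermHom K n A (Projectivization.mk K v hv) = Projectivization.mk K v hv := by
      rw [hA]; rfl
    rw [glPermHom_mk A v hv (mulVec_ne_zero A v hv)] at h1
    exact (Projectivization.mk_eq_mk_iff' _ _ _ _ _).1 h1
  have hb : ∀ j : Fin n, (Pi.single j (1 : K) : Fin n → K) ≠ 0 := by
    intro j h
    have := congrFun h j
    simp at this
  choose c hc using fun j => key (Pi.single j (1 : K)) (hb j)
  have i0 : Fin n := ⟨0, Nat.pos_of_ne_zero hn⟩
  have hdiag : ∀ j : Fin n, c j = c i0 := by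
    intro j
    rcases eq_or_ne j i0 with rfl | hj
    · rfl
    · have hvne : (Pi.single j (1 : K) + Pi.single i0 (1 : K) : Fin n → K) ≠ 0 := by
        intro h
        have := congrFun h j
        rw [Pi.add_apply, Pi.single_eq_same, Pi.single_eq_of_ne hj] at this
        simp at this
      obtain ⟨d, hd⟩ := key _ hvne
      rw [Matrix.mulVec_add, ← hc j, ← hc i0] at hd
      have hdj := congrFun hd j
      have hdi := congrFun hd i0
      simp [Pi.single_apply, hj, Ne.symm hj] at hdj hdi
      rw [← hdj, ← hdi]
  have hMeq : M = scalar (Fin n) (c i0) := by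
    ext i j
    have h1 := (hc j).symm
    have h2 := congrFun h1 i
    rw [Matrix.mulVec_single] at h2
    simp only [Pi.smul_apply, MulOpposite.op_one, one_smul, Matrix.col_apply] at h2
    rw [scalar_apply, diagonal_apply]
    rcases eq_or_ne i j with rfl | hij
    · simpa [hdiag i] using h2
    · simpa [Pi.single_eq_of_ne (Ne.symm hij), hij] using h2
  rw [Subgroup.mem_center_iff]
  intro g
  refine Units.ext ?_
  rw [Units.val_mul, Units.val_mul]
  show (g : Matrix (Fin n) (Fin n) K) * M = M * (g : Matrix (Fin n) (Fin n) K)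
  rw [hMeq]
  exact (Matrix.scalar_commute (c i0) (fun r => Commute.all _ r) _).symm

end GLPerm

section RegRep
variable (S : Type) [Group S] [Fintype S] (F : Type) [Field F]

/-- The regular representation of a finite group by linear automorphisms of `F^|S|`. -/
noncomputable def regRep : S →* ((Fin (Fintype.card S) → F) ≃ₗ[F] (Fin (Fintype.card S) → F)) where
  toFun g := LinearEquiv.funCongrLeft F F
    ((Fintype.equivFin S).symm.trans ((Equiv.mulLeft g⁻¹).trans (Fintype.equivFin S)))
  map_one' := by
    apply LinearEquiv.ext
    intro f
    ext x
    simp [LinearEquiv.funCongrLeft, LinearMap.funLeft]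
  map_mul' := by
    intro g h
    apply LinearEquiv.ext
    intro f
    ext x
    simp [linMul_apply, LinearEquiv.funCongrLeft, LinearMap.funLeft, mul_assoc]

theorem regRep_injective : Function.Injective (regRep S F) := by
  intro g h hgh
  have key : ∀ (f : Fin (Fintype.card S) → F) (x : Fin (Fintype.card S)),
      f (Fintype.equivFin S (g⁻¹ * (Fintype.equivFin S).symm x)) =
      f (Fintype.equivFin S (h⁻¹ * (Fintype.equivFin S).symm x)) := by
    intro f x
    have := congrFun (congrArg
      (fun (e : (Fin (Fintype.card S) → F) ≃ₗ[F] _) => (e f : Fin (Fintype.card S) → F)) hgh) x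
    simpa [regRep, LinearEquiv.funCongrLeft, LinearMap.funLeft] using this
  have h2 : ∀ y : S, g⁻¹ * y = h⁻¹ * y := by
    intro y
    have := key (Pi.single (Fintype.equivFin S (g⁻¹ * y)) (1 : F)) (Fintype.equivFin S y)
    rw [Equiv.symm_apply_apply] at this
    rw [Pi.single_eq_same] at this
    by_contra hne
    rw [Pi.single_eq_of_ne] at this
    · exact one_ne_zero this
    · intro hc
      exact hne ((Fintype.equivFin S).injective hc).symm
  have := h2 1
  rw [mul_one, mul_one] at this
  rw [← inv_inv g, this, inv_inv]

/-- The regular representation into `GL_{|S|}(F)`. -/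
noncomputable def regGL : S →* GL (Fin (Fintype.card S)) F :=
  (Matrix.GeneralLinearGroup.toLin.symm.toMonoidHom.comp
    (LinearMap.GeneralLinearGroup.generalLinearEquiv F
      (Fin (Fintype.card S) → F)).symm.toMonoidHom).comp (regRep S F)

theorem regGL_injective : Function.Injective (regGL S F) := by
  intro a b hab
  apply regRep_injective S F
  apply (LinearMap.GeneralLinearGroup.generalLinearEquiv F
    (Fin (Fintype.card S) → F)).symm.injective
  apply Matrix.GeneralLinearGroup.toLin.symm.injective
  exact hab

theorem witness_exists (hna : ¬ ∀ x y : S, x * y = y * x) :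
    Nonempty (ProjRepWitness S (2 ^ Fintype.card S)) := by
  haveI : Fact (Nat.Prime 2) := ⟨Nat.prime_two⟩
  have hnontriv : (QuotientGroup.mk' (Subgroup.center (GL (Fin (Fintype.card S)) (ZMod 2)))).comp
      (regGL S (ZMod 2)) ≠ 1 := by
    intro hφ
    apply hna
    intro x y
    have hc : ∀ z : S,
        regGL S (ZMod 2) z ∈ Subgroup.center (GL (Fin (Fintype.card S)) (ZMod 2)) := by
      intro z
      have := congrFun (congrArg (fun (ψ : S →* _) => (ψ : S → _)) hφ) z
      simpa [QuotientGroup.eq_one_iff] using this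
    have := (Subgroup.mem_center_iff.mp (hc x)) (regGL S (ZMod 2) y)
    have hxy : regGL S (ZMod 2) (y * x) = regGL S (ZMod 2) (x * y) := by
      rw [MonoidHom.map_mul, MonoidHom.map_mul, this]
    exact (regGL_injective S (ZMod 2) hxy).symm
  exact ⟨{
    F := ZMod 2
    instF := inferInstance
    instFin := inferInstance
    n := Fintype.card S
    hn := Fintype.card_pos
    card_eq := by rw [ZMod.card]
    φ := (QuotientGroup.mk' (Subgroup.center (GL (Fin (Fintype.card S)) (ZMod 2)))).comp
      (regGL S (ZMod 2))
    nontriv := hnontriv }⟩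

end RegRep

end StatementAux

open StatementAux in
theorem statement1 (S : Type) [Group S] [Fintype S] (hS : IsSimpleGroup S)
    (hna : ¬ ∀ x y : S, x * y = y * x) (s : ℕ) (hs : 1 ≤ s) :
    permDeg (Fin s → S) < lproj S ^ s := by
  haveI := hS
  -- obtain a minimal projective representation witness
  have hne : {m | Nonempty (ProjRepWitness S m)}.Nonempty :=
    ⟨2 ^ Fintype.card S, witness_exists S hna⟩
  obtain ⟨W⟩ : Nonempty (ProjRepWitness S (lproj S)) := Nat.sInf_mem hne
  letI := W.instF
  letI := W.instFin
  have hn0 : W.n ≠ 0 := Nat.one_le_iff_ne_zero.mp W.hn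
  -- descend the projective-space action to the quotient
  let ψ : (GL (Fin W.n) W.F ⧸ Subgroup.center (GL (Fin W.n) W.F)) →*
      Equiv.Perm (ℙ W.F (Fin W.n → W.F)) :=
    QuotientGroup.lift _ (glPermHom W.F W.n)
      (fun A hA => MonoidHom.mem_ker.mpr (glPermHom_eq_one_of_mem_center A hA))
  let σ : S →* Equiv.Perm (ℙ W.F (Fin W.n → W.F)) := ψ.comp W.φ
  -- σ is injective
  have hσinj : Function.Injective σ := by
    rcases Subgroup.Normal.eq_bot_or_eq_top (MonoidHom.normal_ker σ) with hk | hk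
    · exact (MonoidHom.ker_eq_bot_iff σ).mp hk
    · exfalso
      apply W.nontriv
      ext g
      have hg : σ g = 1 := by
        have : g ∈ σ.ker := by rw [hk]; trivial
        exact this
      obtain ⟨A, hA⟩ := QuotientGroup.mk'_surjective _ (W.φ g)
      have hA1 : glPermHom W.F W.n A = 1 := by
        have : ψ (W.φ g) = 1 := hg
        rw [← hA] at this
        simpa [ψ] using this
      have hAc := mem_center_of_glPermHom_eq_one hn0 A hA1
      rw [MonoidHom.one_apply, ← hA]
      simpa [QuotientGroup.eq_one_iff] using hAc
  -- find a point moved by some element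
  push_neg at hna
  obtain ⟨x, y, hxy⟩ := hna
  have hx1 : x ≠ 1 := by
    intro h
    apply hxy
    rw [h, one_mul, mul_one]
  have hσx : σ x ≠ 1 := by
    intro h
    exact hx1 (hσinj (by rw [h, MonoidHom.map_one]))
  have hmoved : ∃ p : ℙ W.F (Fin W.n → W.F), σ x p ≠ p := by
    by_contra h
    push_neg at h
    exact hσx (Equiv.ext fun p => h p)
  obtain ⟨p, hp⟩ := hmoved
  -- finiteness of projective space
  haveI hfinP : Finite (ℙ W.F (Fin W.n → W.F)) := by
    refine Finite.of_surjective
      (fun v : {v : Fin W.n → W.F // v ≠ 0} => Projectivization.mk W.F v.1 v.2) ?_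
    intro q
    induction q using Projectivization.ind with
    | h v hv => exact ⟨⟨v, hv⟩, rfl⟩
  -- the orbit of p
  let X : Type := {q : ℙ W.F (Fin W.n → W.F) // ∃ g : S, σ g p = q}
  have hmem : ∀ (g : S) (q : ℙ W.F (Fin W.n → W.F)),
      (∃ h, σ h p = q) ↔ (∃ h, σ h p = σ g q) := by
    intro g q
    constructor
    · rintro ⟨h, rfl⟩
      exact ⟨g * h, by rw [MonoidHom.map_mul, Equiv.Perm.mul_apply]⟩
    · rintro ⟨h, hh⟩
      refine ⟨g⁻¹ * h, ?_⟩
      rw [MonoidHom.map_mul, Equiv.Perm.mul_apply, hh, MonoidHom.map_inv]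
      exact Equiv.symm_apply_apply _ _
  let τ : S →* Equiv.Perm X :=
    { toFun := fun g => (σ g).subtypePerm (fun q => (hmem g q).symm)
      map_one' := by
        ext q
        show σ 1 (q : ℙ W.F (Fin W.n → W.F)) = q
        rw [MonoidHom.map_one]
        rfl
      map_mul' := by
        intro g h
        ext q
        show σ (g * h) (q : ℙ W.F (Fin W.n → W.F)) = σ g (σ h q)
        rw [MonoidHom.map_mul, Equiv.Perm.mul_apply] }
  have hτ_apply : ∀ (g : S) (q : X), (τ g q : ℙ W.F (Fin W.n → W.F)) = σ g q := fun _ _ => rfl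
  let p0 : X := ⟨p, 1, by rw [MonoidHom.map_one]; rfl⟩
  -- τ is injective
  have hτinj : Function.Injective τ := by
    rcases Subgroup.Normal.eq_bot_or_eq_top (MonoidHom.normal_ker τ) with hk | hk
    · exact (MonoidHom.ker_eq_bot_iff τ).mp hk
    · exfalso
      apply hp
      have : x ∈ τ.ker := by rw [hk]; trivial
      have hτx : τ x = 1 := this
      have := congrArg (fun (e : Equiv.Perm X) => (e p0 : ℙ W.F (Fin W.n → W.F))) hτx
      simpa [hτ_apply] using this
  -- τ is transitive
  have hτtrans : ∀ q r : X, ∃ k : S, τ k q = r := by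
    rintro ⟨q, g, hg⟩ ⟨r, h, hh⟩
    refine ⟨h * g⁻¹, Subtype.ext ?_⟩
    rw [hτ_apply]
    show σ (h * g⁻¹) q = r
    rw [← hg, ← hh, MonoidHom.map_mul, Equiv.Perm.mul_apply, MonoidHom.map_inv]
    rw [Equiv.Perm.inv_def, Equiv.symm_apply_apply]
  haveI hfinX : Finite X := Subtype.finite
  -- the degree bound
  have hbound : Nat.card X < lproj S := by
    classical
    have h1 : Nat.card X ≤ Nat.card (ℙ W.F (Fin W.n → W.F)) :=
      Nat.card_le_card_of_injective Subtype.val Subtype.val_injective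
    have h2 : Nat.card (ℙ W.F (Fin W.n → W.F)) ≤ Nat.card {v : Fin W.n → W.F // v ≠ 0} :=
      Nat.card_le_card_of_surjective
        (fun v : {v : Fin W.n → W.F // v ≠ 0} => Projectivization.mk W.F v.1 v.2)
        (by
          intro q
          induction q using Projectivization.ind with
          | h v hv => exact ⟨⟨v, hv⟩, rfl⟩)
    have h3 : Nat.card {v : Fin W.n → W.F // v ≠ 0} < Nat.card (Fin W.n → W.F) := by
      rw [Nat.card_eq_fintype_card, Nat.card_eq_fintype_card]
      exact Fintype.card_subtype_lt (x := 0) (by simp)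
    have h4 : Nat.card (Fin W.n → W.F) = lproj S := by
      rw [Nat.card_eq_fintype_card, Fintype.card_fun, Fintype.card_fin, W.card_eq]
    calc Nat.card X ≤ Nat.card (ℙ W.F (Fin W.n → W.F)) := h1
      _ ≤ Nat.card {v : Fin W.n → W.F // v ≠ 0} := h2
      _ < Nat.card (Fin W.n → W.F) := h3
      _ = lproj S := h4
  -- the product representation of S^s
  have hdeg : IsFaithfulTransitiveDegree (Fin s → S) (Nat.card X ^ s) := by
    refine ⟨Fin s → X,
      { toFun := fun gs => Equiv.piCongrRight (fun i => τ (gs i))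
        map_one' := by
          ext f
          simp
        map_mul' := by
          intro g h
          ext f
          simp [Equiv.Perm.mul_apply] }, inferInstance, ?_, ?_, ?_⟩
    · rw [Nat.card_fun, Nat.card_eq_fintype_card (α := Fin s), Fintype.card_fin]
    · intro a b hab
      funext i
      apply hτinj
      apply Equiv.ext
      intro q
      have := congrFun (congrArg (fun (e : Equiv.Perm (Fin s → X)) => (e : (Fin s → X) → Fin s → X))
        hab) (fun _ => q)
      exact congrFun this i
    · intro f f'
      have := fun i => hτtrans (f i) (f' i)
      choose k hk using this
      exact ⟨k, funext fun i => hk i⟩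
  have hle : permDeg (Fin s → S) ≤ Nat.card X ^ s := Nat.sInf_le hdeg
  exact lt_of_le_of_lt hle (Nat.pow_lt_pow_left hbound (Nat.one_le_iff_ne_zero.mp hs))
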